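/- For any Young diagram λ, the Y-function admits a reduced product formula over addable and removable boxes: (1−v/x)·∏_{(i,j)∈λ} 𝒮(v q_1^{i-1} q_2^{j-1}/x) = ∏_{□∈A(λ)}(1 − χ(□)/x) / ∏_{□∈R(λ)}(1 − q_1 q_2 χ(□)/x), where 𝒮(u) = (1−q_1 u)(1−q_2 u)/((1−u)(1−q_1 q_2 u)), χ(□) = v q_1^{i-1} q_2^{j-1} for □ = (i,j), A(λ) is the set of addable boxes of λ, and R(λ) is the set of removable boxes of λ. -/

import Mathlib

theorem aux_shell {K : Type*} [Field K] (q1 q2 w : K)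
    (l : ℕ → ℕ) (N : ℕ) (hmono : ∀ i, l (i + 1) ≤ l i) (hN : ∀ i, N ≤ i → l i = 0)
    (h : ∀ a b : ℕ, (1 : K) - w * q1 ^ a * q2 ^ b ≠ 0) :
    (1 - w) *
        ∏ i ∈ Finset.range N, ∏ j ∈ Finset.range (l i),
          (((1 - q1 * (w * q1 ^ i * q2 ^ j)) * (1 - q2 * (w * q1 ^ i * q2 ^ j))) /
            ((1 - w * q1 ^ i * q2 ^ j) * (1 - q1 * q2 * (w * q1 ^ i * q2 ^ j)))) =
      (∏ i ∈ (Finset.range (N + 1)).filter (fun i => i = 0 ∨ l i < l (i - 1)),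
          (1 - w * q1 ^ i * q2 ^ (l i))) /
        ∏ i ∈ (Finset.range N).filter (fun i => l (i + 1) < l i),
          (1 - w * q1 ^ (i + 1) * q2 ^ (l i)) := by
  have row : ∀ i m : ℕ,
      ∏ j ∈ Finset.range m,
          (((1 - q1 * (w * q1 ^ i * q2 ^ j)) * (1 - q2 * (w * q1 ^ i * q2 ^ j))) /
            ((1 - w * q1 ^ i * q2 ^ j) * (1 - q1 * q2 * (w * q1 ^ i * q2 ^ j)))) =
        ((1 - w * q1 ^ i * q2 ^ m) * (1 - w * q1 ^ (i + 1))) /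
          ((1 - w * q1 ^ i) * (1 - w * q1 ^ (i + 1) * q2 ^ m)) := by
    intro i m
    induction m with
    | zero =>
      rw [Finset.prod_range_zero]
      have h5 : (1 : K) - w * q1 ^ i ≠ 0 := by simpa using h i 0
      have h6 : (1 : K) - w * q1 ^ (i + 1) ≠ 0 := by simpa using h (i + 1) 0
      rw [pow_zero, mul_one, mul_one, div_self (mul_ne_zero h5 h6)]
    | succ m ih =>
      rw [Finset.prod_range_succ, ih]
      have h1 : (1 : K) - w * q1 ^ i * q2 ^ m ≠ 0 := h i m
      have h2 : (1 : K) - w * q1 ^ (i + 1) * q2 ^ m ≠ 0 := h (i + 1) m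
      have h3 : (1 : K) - w * q1 ^ (i + 1) * q2 ^ (m + 1) ≠ 0 := h (i + 1) (m + 1)
      have h4 : (1 : K) - w * q1 ^ i * q2 ^ (m + 1) ≠ 0 := h i (m + 1)
      have h5 : (1 : K) - w * q1 ^ i ≠ 0 := by simpa using h i 0
      have h6 : (1 : K) - w * q1 ^ (i + 1) ≠ 0 := by simpa using h (i + 1) 0
      rw [show (1 : K) - q1 * (w * q1 ^ i * q2 ^ m) = 1 - w * q1 ^ (i + 1) * q2 ^ m by ring,
        show (1 : K) - q2 * (w * q1 ^ i * q2 ^ m) = 1 - w * q1 ^ i * q2 ^ (m + 1) by ring,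
        show (1 : K) - q1 * q2 * (w * q1 ^ i * q2 ^ m) = 1 - w * q1 ^ (i + 1) * q2 ^ (m + 1) by
          ring]
      rw [div_mul_div_comm, div_eq_div_iff (mul_ne_zero (mul_ne_zero h5 h2) (mul_ne_zero h1 h3))
        (mul_ne_zero h5 h3)]
      ring
  have main : ∀ n : ℕ,
      (1 - w) *
          ∏ i ∈ Finset.range n, ∏ j ∈ Finset.range (l i),
            (((1 - q1 * (w * q1 ^ i * q2 ^ j)) * (1 - q2 * (w * q1 ^ i * q2 ^ j))) /
              ((1 - w * q1 ^ i * q2 ^ j) * (1 - q1 * q2 * (w * q1 ^ i * q2 ^ j)))) =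
        ((∏ i ∈ Finset.range n, (1 - w * q1 ^ i * q2 ^ (l i))) * (1 - w * q1 ^ n)) /
          ∏ i ∈ Finset.range n, (1 - w * q1 ^ (i + 1) * q2 ^ (l i)) := by
    intro n
    induction n with
    | zero => simp
    | succ n ih =>
      rw [Finset.prod_range_succ, ← mul_assoc, ih, row n (l n), Finset.prod_range_succ,
        Finset.prod_range_succ]
      have hP : (∏ i ∈ Finset.range n, (1 - w * q1 ^ (i + 1) * q2 ^ (l i))) ≠ 0 :=
        Finset.prod_ne_zero_iff.mpr fun i _ => h (i + 1) (l i)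
      have h1 : (1 : K) - w * q1 ^ n * q2 ^ (l n) ≠ 0 := h n (l n)
      have h2 : (1 : K) - w * q1 ^ (n + 1) * q2 ^ (l n) ≠ 0 := h (n + 1) (l n)
      have h5 : (1 : K) - w * q1 ^ n ≠ 0 := by simpa using h n 0
      have h6 : (1 : K) - w * q1 ^ (n + 1) ≠ 0 := by simpa using h (n + 1) 0
      field_simp
  rw [main N]
  have hlN : l N = 0 := hN N le_rfl
  have e1 : (1 : K) - w * q1 ^ N = 1 - w * q1 ^ N * q2 ^ (l N) := by rw [hlN]; ring
  rw [e1, ← Finset.prod_range_succ (fun i => (1 : K) - w * q1 ^ i * q2 ^ (l i)) N]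
  rw [← Finset.prod_filter_mul_prod_filter_not (Finset.range (N + 1))
      (fun i => i = 0 ∨ l i < l (i - 1)) (fun i => (1 : K) - w * q1 ^ i * q2 ^ (l i)),
    ← Finset.prod_filter_mul_prod_filter_not (Finset.range N)
      (fun i => l (i + 1) < l i) (fun i => (1 : K) - w * q1 ^ (i + 1) * q2 ^ (l i))]
  have cancel :
      (∏ i ∈ (Finset.range (N + 1)).filter (fun i => ¬(i = 0 ∨ l i < l (i - 1))),
        (1 - w * q1 ^ i * q2 ^ (l i))) =
      ∏ i ∈ (Finset.range N).filter (fun i => ¬ l (i + 1) < l i),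
        (1 - w * q1 ^ (i + 1) * q2 ^ (l i)) := by
    apply Finset.prod_nbij' (fun i => i - 1) (fun j => j + 1)
    · intro a ha
      simp only [Finset.mem_filter, Finset.mem_range, not_or, not_lt] at ha ⊢
      obtain ⟨haN, ha0, hle⟩ := ha
      have h1 : 1 ≤ a := Nat.one_le_iff_ne_zero.mpr ha0
      rw [Nat.sub_add_cancel h1]
      exact ⟨by omega, hle⟩
    · intro a ha
      simp only [Finset.mem_filter, Finset.mem_range, not_or, not_lt, Nat.add_sub_cancel] at ha ⊢
      exact ⟨by omega, by omega, ha.2⟩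
    · intro a ha
      simp only [Finset.mem_filter, Finset.mem_range, not_or] at ha
      omega
    · intro a _
      omega
    · intro a ha
      simp only [Finset.mem_filter, Finset.mem_range, not_or, not_lt] at ha
      obtain ⟨haN, ha0, hle⟩ := ha
      have h1 : 1 ≤ a := Nat.one_le_iff_ne_zero.mpr ha0
      have hm : l a ≤ l (a - 1) := by
        have := hmono (a - 1)
        rwa [Nat.sub_add_cancel h1] at this
      have heq : l (a - 1) = l a := le_antisymm hle hm
      rw [show a - 1 + 1 = a from by omega, heq]
  rw [cancel]
  have hC : (∏ i ∈ (Finset.range N).filter (fun i => ¬ l (i + 1) < l i),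
      (1 - w * q1 ^ (i + 1) * q2 ^ (l i))) ≠ 0 :=
    Finset.prod_ne_zero_iff.mpr fun i _ => h (i + 1) (l i)
  rw [mul_div_mul_right _ _ hC]

/-- Shell formula for the Y-function. -/
theorem Y_function_shell_formula {K : Type*} [Field K] (q1 q2 v x : K)
    (l : ℕ → ℕ) (N : ℕ) (hmono : ∀ i, l (i + 1) ≤ l i) (hN : ∀ i, N ≤ i → l i = 0)
    (h : ∀ a b : ℕ, (1 : K) - v * q1 ^ a * q2 ^ b / x ≠ 0) :
    (1 - v / x) *
        ∏ i ∈ Finset.range N, ∏ j ∈ Finset.range (l i),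
          (((1 - q1 * (v * q1 ^ i * q2 ^ j / x)) * (1 - q2 * (v * q1 ^ i * q2 ^ j / x))) /
            ((1 - v * q1 ^ i * q2 ^ j / x) * (1 - q1 * q2 * (v * q1 ^ i * q2 ^ j / x)))) =
      (∏ i ∈ (Finset.range (N + 1)).filter (fun i => i = 0 ∨ l i < l (i - 1)),
          (1 - v * q1 ^ i * q2 ^ (l i) / x)) /
        ∏ i ∈ (Finset.range N).filter (fun i => l (i + 1) < l i),
          (1 - v * q1 ^ (i + 1) * q2 ^ (l i) / x) := by
  have e : ∀ a b : ℕ, v * q1 ^ a * q2 ^ b / x = v / x * q1 ^ a * q2 ^ b := by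
    intro a b; ring
  have h' : ∀ a b : ℕ, (1 : K) - v / x * q1 ^ a * q2 ^ b ≠ 0 := by
    intro a b; rw [← e]; exact h a b
  simp only [e]
  exact aux_shell q1 q2 (v / x) l N hmono hN h'
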